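/- Theorem 3.4 (Markovianity without time-scale separation): Let the N×N rate matrix W have the block structure W x y = R x y when c x = c y and W x y = V (c x) (c y) when c x ≠ c y (transitions between different mesostates are independent of the microstate). Then: (i) W satisfies the lumpability condition; in particular, for every y with c y = α, ∑_{x : c x = α} R x y = −∑_{β ≠ α} n_β · V β α, where n_α = #{x : c x = α}; (ii) defining the lumped rate matrix 𝒱 by 𝒱 α β = n_α · V α β for α ≠ β and 𝒱 β β = −∑_{α ≠ β} n_α · V α β, one has Λ W = 𝒱 Λ, so every solution of d/dt p = W p has lumped marginal obeying d/dt (Λp) α = ∑_{β ≠ α} ( n_α V α β (Λp) β − n_β V β α (Λp) α ); (iii) if W π = 0 for a probability vector π, then 𝒱 (Λπ) = 0, and hence for strictly positive Λp and Λπ the mesolevel entropy production rate −∑_α (𝒱 (Λp))_α · (log (Λp)_α − log (Λπ)_α) is nonnegative. -/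

import Mathlib

open Matrix Finset

/-- Coarse-graining operator: `(Λ p) α = ∑_{x : c x = α} p x`. -/
noncomputable def lump {N M : ℕ} (c : Fin N → Fin M) (p : Fin N → ℝ) : Fin M → ℝ :=
  fun α => ∑ x, if c x = α then p x else 0

/-- The coarse-graining operator `Λ` as an `M × N` matrix. -/
noncomputable def lumpMat {N M : ℕ} (c : Fin N → Fin M) : Matrix (Fin M) (Fin N) ℝ :=
  Matrix.of fun α x => if c x = α then (1 : ℝ) else 0

/-- `n_α = #{x : c x = α}`, the number of microstates in mesostate `α`. -/
noncomputable def blockSize {N M : ℕ} (c : Fin N → Fin M) (α : Fin M) : ℝ :=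
  ((univ.filter fun x => c x = α).card : ℝ)

/-- The lumped rate matrix `𝒱`: `𝒱 α β = n_α · V α β` for `α ≠ β` and
`𝒱 β β = −∑_{α ≠ β} n_α · V α β`. -/
noncomputable def lumpedRate {N M : ℕ} (c : Fin N → Fin M)
    (V : Matrix (Fin M) (Fin M) ℝ) : Matrix (Fin M) (Fin M) ℝ :=
  Matrix.of fun α β =>
    if α = β then -∑ γ ∈ univ.filter (fun γ => γ ≠ β), blockSize c γ * V γ β
    else blockSize c α * V α β

/- ### Auxiliary lemmas -/

lemma sum_comp_block {N M : ℕ} (c : Fin N → Fin M) (g : Fin M → ℝ) :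
    ∑ x, g (c x) = ∑ γ, blockSize c γ * g γ := by
  have : ∀ x : Fin N, g (c x) = ∑ γ, if c x = γ then g γ else 0 := by
    intro x; simp
  simp_rw [this]
  rw [Finset.sum_comm]
  congr 1; ext γ
  rw [← Finset.sum_filter, Finset.sum_const, blockSize, nsmul_eq_mul]

lemma colsum {N M : ℕ} (c : Fin N → Fin M)
    (W : Matrix (Fin N) (Fin N) ℝ) (V : Matrix (Fin M) (Fin M) ℝ)
    (hWsum : ∀ y, ∑ x, W x y = 0)
    (hV : ∀ x y, c x ≠ c y → W x y = V (c x) (c y))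
    (α : Fin M) (y : Fin N) :
    (∑ x, if c x = α then W x y else 0) = lumpedRate c V α (c y) := by
  by_cases hab : α = c y
  · have split : (∑ x, if c x = α then W x y else 0)
        = (∑ x, W x y) - ∑ x, if c x = α then 0 else W x y := by
      rw [eq_sub_iff_add_eq, ← Finset.sum_add_distrib]
      congr 1; ext x; by_cases h : c x = α <;> simp [h]
    rw [split, hWsum, zero_sub]
    have h2 : (∑ x, if c x = α then 0 else W x y)
        = ∑ x, (fun γ => if γ = α then 0 else V γ (c y)) (c x) := by
      congr 1; ext x
      by_cases h : c x = α
      · simp [h]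
      · simp only [if_neg h]
        rw [hV x y (fun hc => h (hc.trans hab.symm))]
    rw [h2, sum_comp_block c (fun γ => if γ = α then 0 else V γ (c y)),
      lumpedRate, Matrix.of_apply, if_pos hab, neg_inj, Finset.sum_filter]
    congr 1; ext γ
    by_cases h : γ = c y
    · subst h; simp [← hab]
    · have : γ ≠ α := fun hc => h (hc.trans hab)
      simp [h, this]
  · have : (∑ x, if c x = α then W x y else 0)
        = ∑ x, if c x = α then V α (c y) else 0 := by
      congr 1; ext x
      by_cases h : c x = α
      · simp only [if_pos h]
        rw [hV x y (h ▸ hab), h]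
      · simp [h]
    rw [this, ← Finset.sum_filter, Finset.sum_const, nsmul_eq_mul,
      lumpedRate, Matrix.of_apply, if_neg hab, blockSize]

lemma EP_nonneg {M : ℕ} (A : Matrix (Fin M) (Fin M) ℝ)
    (hoff : ∀ α β, α ≠ β → 0 ≤ A α β) (hcol : ∀ β, ∑ α, A α β = 0)
    (q qs : Fin M → ℝ) (hq : ∀ α, 0 < q α) (hqs : ∀ α, 0 < qs α)
    (hfix : A *ᵥ qs = 0) :
    0 ≤ -∑ α, (A *ᵥ q) α * (Real.log (q α) - Real.log (qs α)) := by
  set f : Fin M → ℝ := fun α => Real.log (q α) - Real.log (qs α) with hf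
  have h1 : ∑ α, ∑ β, A α β * q β * f β = 0 := by
    rw [Finset.sum_comm]
    have h : ∀ β : Fin M, ∑ α, A α β * q β * f β = (∑ α, A α β) * (q β * f β) := by
      intro β; rw [Finset.sum_mul]; congr 1; ext α; ring
    simp_rw [h, hcol, zero_mul, Finset.sum_const_zero]
  have h2 : ∑ α, (A *ᵥ q) α * f α = ∑ α, ∑ β, A α β * q β * f α := by
    congr 1; ext α; rw [Matrix.mulVec, dotProduct, Finset.sum_mul]
  have step1 : -∑ α, (A *ᵥ q) α * f α = ∑ α, ∑ β, A α β * q β * (f β - f α) := by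
    calc -∑ α, (A *ᵥ q) α * f α
        = (∑ α, ∑ β, A α β * q β * f β) - ∑ α, ∑ β, A α β * q β * f α := by
          rw [h1, h2]; ring
      _ = ∑ α, ∑ β, (A α β * q β * f β - A α β * q β * f α) := by
          rw [← Finset.sum_sub_distrib]; congr 1; ext α; rw [← Finset.sum_sub_distrib]
      _ = ∑ α, ∑ β, A α β * q β * (f β - f α) := by
          congr 1; ext α; congr 1; ext β; ring
  have step2 : ∑ α, ∑ β, A α β * (q β - qs β * (q α / qs α)) = 0 := by
    have h : ∀ α β : Fin M, A α β * (q β - qs β * (q α / qs α))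
        = A α β * q β - (q α / qs α) * (A α β * qs β) := by intro α β; ring
    simp_rw [h, Finset.sum_sub_distrib]
    have hA : ∑ α, ∑ β, A α β * q β = 0 := by
      rw [Finset.sum_comm]
      have h' : ∀ β : Fin M, ∑ α, A α β * q β = (∑ α, A α β) * q β := by
        intro β; rw [Finset.sum_mul]
      simp_rw [h', hcol, zero_mul, Finset.sum_const_zero]
    have hB : ∑ α, ∑ β, (q α / qs α) * (A α β * qs β) = 0 := by
      have h' : ∀ α : Fin M, ∑ β, (q α / qs α) * (A α β * qs β)
          = (q α / qs α) * (A *ᵥ qs) α := by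
        intro α; rw [Matrix.mulVec, dotProduct, Finset.mul_sum]
      simp_rw [h', hfix]
      simp
    rw [hA, hB, sub_zero]
  have key : ∀ α β : Fin M, A α β * (q β - qs β * (q α / qs α)) ≤ A α β * (q β * (f β - f α)) := by
    intro α β
    by_cases h : α = β
    · subst h
      have hne : qs α ≠ 0 := ne_of_gt (hqs α)
      have : qs α * (q α / qs α) = q α := by field_simp
      rw [this]
      simp [hf]
    · apply mul_le_mul_of_nonneg_left _ (hoff α β h)
      have hqa := hq α; have hqb := hq β; have hqsa := hqs α; have hqsb := hqs β
      have hqa' : q α ≠ 0 := ne_of_gt hqa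
      have hqb' : q β ≠ 0 := ne_of_gt hqb
      have hqsa' : qs α ≠ 0 := ne_of_gt hqsa
      have hqsb' : qs β ≠ 0 := ne_of_gt hqsb
      have hr : (0:ℝ) < (q α / qs α) / (q β / qs β) :=
        div_pos (div_pos hqa hqsa) (div_pos hqb hqsb)
      have hlog := Real.log_le_sub_one_of_pos hr
      rw [Real.log_div (ne_of_gt (div_pos hqa hqsa)) (ne_of_gt (div_pos hqb hqsb)),
        Real.log_div (ne_of_gt (hq α)) (ne_of_gt (hqs α)),
        Real.log_div (ne_of_gt (hq β)) (ne_of_gt (hqs β))] at hlog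
      have hfab : f α - f β ≤ (q α / qs α) / (q β / qs β) - 1 := hlog
      have hqβ : (0:ℝ) < q β := hq β
      have hmain : q β * ((q α / qs α) / (q β / qs β)) = qs β * (q α / qs α) := by
        field_simp
      nlinarith [mul_le_mul_of_nonneg_left hfab (le_of_lt hqβ)]
  calc (0:ℝ) = ∑ α, ∑ β, A α β * (q β - qs β * (q α / qs α)) := step2.symm
    _ ≤ ∑ α, ∑ β, A α β * (q β * (f β - f α)) := by
        apply Finset.sum_le_sum; intro α _
        apply Finset.sum_le_sum; intro β _
        exact key α β
    _ = -∑ α, (A *ᵥ q) α * f α := by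
        rw [step1]; congr 1; ext α; congr 1; ext β; ring

lemma lump_eq_mulVec {N M : ℕ} (c : Fin N → Fin M) (v : Fin N → ℝ) :
    lump c v = lumpMat c *ᵥ v := by
  funext α
  rw [lump, Matrix.mulVec, dotProduct]
  congr 1; ext x
  by_cases h : c x = α <;> simp [lumpMat, h]


/-- `(𝒱 *ᵥ q) α` expanded as the master-equation right-hand side. -/
lemma lumpedRate_apply {N M : ℕ} (c : Fin N → Fin M) (V : Matrix (Fin M) (Fin M) ℝ)
    (q : Fin M → ℝ) (α : Fin M) :
    (lumpedRate c V *ᵥ q) α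
      = ∑ β ∈ univ.filter (fun β => β ≠ α),
          (blockSize c α * V α β * q β - blockSize c β * V β α * q α) := by
  rw [Matrix.mulVec, dotProduct]
  rw [← Finset.sum_filter_add_sum_filter_not univ (fun β => β = α)]
  have h1 : (univ.filter fun β : Fin M => β = α) = {α} := by
    ext β; simp
  rw [h1, Finset.sum_singleton]
  have h2 : (univ.filter fun β : Fin M => ¬β = α) = univ.filter fun β : Fin M => β ≠ α := rfl
  rw [h2]
  have hdiag : lumpedRate c V α α
      = -∑ γ ∈ univ.filter (fun γ => γ ≠ α), blockSize c γ * V γ α := by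
    simp [lumpedRate]
  rw [hdiag, Finset.sum_sub_distrib, ← Finset.sum_mul]
  have hoffd : ∑ β ∈ univ.filter (fun β : Fin M => β ≠ α), lumpedRate c V α β * q β
      = ∑ β ∈ univ.filter (fun β : Fin M => β ≠ α), blockSize c α * V α β * q β := by
    apply Finset.sum_congr rfl; intro β hβ
    simp only [Finset.mem_filter] at hβ
    rw [lumpedRate, Matrix.of_apply, if_neg (Ne.symm hβ.2)]
  rw [hoffd]
  ring

/-- **Theorem 3.4 (Markovianity without time-scale separation).**
If the rate matrix `W` has the block structure `W x y = R x y` for `c x = c y` and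
`W x y = V (c x) (c y)` for `c x ≠ c y`, then: (i) `W` is lumpable, and in particular
`∑_{x : c x = α} R x y = −∑_{β ≠ α} n_β V β α` whenever `c y = α`;
(ii) `Λ W = 𝒱 Λ`, so any solution of `d/dt p = W p` has lumped marginal obeying
`d/dt (Λp) α = ∑_{β ≠ α} (n_α V α β (Λp) β − n_β V β α (Λp) α)`;
(iii) if `W π = 0` for a probability vector `π`, then `𝒱 (Λπ) = 0` and for strictly
positive `Λp` and `Λπ` the mesolevel entropy production rate is nonnegative. -/
theorem markovian_without_TSS {N M : ℕ} (c : Fin N → Fin M)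
    (W R : Matrix (Fin N) (Fin N) ℝ) (V : Matrix (Fin M) (Fin M) ℝ)
    (hWoff : ∀ x y, x ≠ y → 0 ≤ W x y) (hWsum : ∀ y, ∑ x, W x y = 0)
    (hblock : ∀ x y, (c x = c y → W x y = R x y) ∧ (c x ≠ c y → W x y = V (c x) (c y))) :
    -- (i) lumpability, and the block column sum identity
    ((∀ (α β : Fin M) (y y' : Fin N), c y = β → c y' = β →
        (∑ x, if c x = α then W x y else 0) = ∑ x, if c x = α then W x y' else 0) ∧
      ∀ (α : Fin M) (y : Fin N), c y = α →
        (∑ x, if c x = α then R x y else 0) =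
          -∑ β ∈ univ.filter (fun β => β ≠ α), blockSize c β * V β α) ∧
    -- (ii) Λ W = 𝒱 Λ, and the lumped master equation for every solution
    (lumpMat c * W = lumpedRate c V * lumpMat c ∧
      ∀ p : ℝ → Fin N → ℝ,
        (∀ x t, HasDerivAt (fun s => p s x) ((W *ᵥ p t) x) t) →
        ∀ (α : Fin M) (t : ℝ),
          HasDerivAt (fun s => lump c (p s) α)
            (∑ β ∈ univ.filter (fun β => β ≠ α),
              (blockSize c α * V α β * lump c (p t) β -
                blockSize c β * V β α * lump c (p t) α)) t) ∧
    -- (iii) fixed point and nonnegative entropy production rate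
    ∀ π : Fin N → ℝ, (∀ x, 0 ≤ π x) → (∑ x, π x = 1) → W *ᵥ π = 0 →
      lumpedRate c V *ᵥ lump c π = 0 ∧
      ∀ p : Fin N → ℝ, (∀ x, 0 ≤ p x) → (∑ x, p x = 1) →
        (∀ α, 0 < lump c p α) → (∀ α, 0 < lump c π α) →
        0 ≤ -∑ α, (lumpedRate c V *ᵥ lump c p) α *
          (Real.log (lump c p α) - Real.log (lump c π α)) := by
  have hV : ∀ x y, c x ≠ c y → W x y = V (c x) (c y) := fun x y h => (hblock x y).2 h
  have hcs := colsum c W V hWsum hV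
  -- Λ W = 𝒱 Λ
  have hmat : lumpMat c * W = lumpedRate c V * lumpMat c := by
    ext α y
    have lhs : (lumpMat c * W) α y = ∑ x, if c x = α then W x y else 0 := by
      rw [Matrix.mul_apply]
      congr 1; ext x
      by_cases h : c x = α <;> simp [lumpMat, h]
    have rhs : (lumpedRate c V * lumpMat c) α y = lumpedRate c V α (c y) := by
      rw [Matrix.mul_apply]
      rw [Finset.sum_eq_single (c y)]
      · simp [lumpMat]
      · intro β _ hβ; simp [lumpMat, Ne.symm hβ]
      · intro h; exact absurd (Finset.mem_univ _) h
    rw [lhs, rhs, hcs]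
  -- lump intertwines
  have hinter : ∀ v : Fin N → ℝ, lump c (W *ᵥ v) = lumpedRate c V *ᵥ lump c v := by
    intro v
    rw [lump_eq_mulVec, lump_eq_mulVec, Matrix.mulVec_mulVec, Matrix.mulVec_mulVec, hmat]
  -- column sums of 𝒱 vanish
  have hVcol : ∀ β, ∑ α, lumpedRate c V α β = 0 := by
    intro β
    rw [← Finset.sum_filter_add_sum_filter_not univ (fun α => α = β)]
    have h1 : (univ.filter fun α : Fin M => α = β) = {β} := by ext α; simp
    rw [h1, Finset.sum_singleton]
    have h2 : ∑ α ∈ univ.filter (fun α : Fin M => ¬α = β), lumpedRate c V α β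
        = ∑ α ∈ univ.filter (fun α : Fin M => α ≠ β), blockSize c α * V α β := by
      apply Finset.sum_congr rfl; intro α hα
      simp only [Finset.mem_filter] at hα
      rw [lumpedRate, Matrix.of_apply, if_neg hα.2]
    rw [h2]
    simp [lumpedRate]
  refine ⟨⟨?_, ?_⟩, ⟨hmat, ?_⟩, ?_⟩
  · -- lumpability
    intro α β y y' hy hy'
    rw [hcs α y, hcs α y', hy, hy']
  · -- block column sum identity
    intro α y hy
    have : (∑ x, if c x = α then R x y else 0) = ∑ x, if c x = α then W x y else 0 := by
      congr 1; ext x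
      by_cases h : c x = α
      · simp only [if_pos h]
        rw [(hblock x y).1 (h.trans hy.symm)]
      · simp [h]
    rw [this, hcs α y, hy, lumpedRate, Matrix.of_apply, if_pos rfl]
  · -- master equation
    intro p hp α t
    have hd : HasDerivAt (fun s => lump c (p s) α)
        (∑ x, if c x = α then (W *ᵥ p t) x else 0) t := by
      have : ∀ x ∈ univ, HasDerivAt (fun s => if c x = α then p s x else 0)
          (if c x = α then (W *ᵥ p t) x else 0) t := by
        intro x _
        by_cases h : c x = α
        · simp only [if_pos h]; exact hp x t
        · simp only [if_neg h]; exact hasDerivAt_const t 0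
      exact HasDerivAt.fun_sum this
    have heq : (∑ x, if c x = α then (W *ᵥ p t) x else 0)
        = ∑ β ∈ univ.filter (fun β => β ≠ α),
            (blockSize c α * V α β * lump c (p t) β -
              blockSize c β * V β α * lump c (p t) α) := by
      have : (∑ x, if c x = α then (W *ᵥ p t) x else 0) = lump c (W *ᵥ p t) α := rfl
      rw [this, hinter, lumpedRate_apply]
    rw [heq] at hd
    exact hd
  · -- (iii)
    intro π hπ0 hπ1 hπfix
    have hfix : lumpedRate c V *ᵥ lump c π = 0 := by
      rw [← hinter, hπfix]
      funext α
      simp [lump, Pi.zero_apply]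
    refine ⟨hfix, ?_⟩
    intro p hp0 hp1 hppos hπpos
    apply EP_nonneg (lumpedRate c V) ?_ hVcol (lump c p) (lump c π) hppos hπpos hfix
    -- off-diagonal nonnegativity
    intro α β hαβ
    rw [lumpedRate, Matrix.of_apply, if_neg hαβ]
    by_cases hα : ∃ x, c x = α
    · obtain ⟨x, hx⟩ := hα
      have hβ : ∃ y, c y = β := by
        by_contra hcon
        push_neg at hcon
        have hz : lump c π β = 0 := by
          rw [lump]; apply Finset.sum_eq_zero; intro z _; simp [hcon z]
        exact absurd hz (ne_of_gt (hπpos β))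
      obtain ⟨y, hy⟩ := hβ
      have hxy : x ≠ y := by
        intro h; rw [h, hy] at hx; exact hαβ hx.symm
      have : W x y = V α β := by
        rw [hV x y (by rw [hx, hy]; exact hαβ), hx, hy]
      have hVnn : 0 ≤ V α β := this ▸ hWoff x y hxy
      exact mul_nonneg (Nat.cast_nonneg _) hVnn
    · push_neg at hα
      have : (univ.filter fun x => c x = α) = ∅ := by
        apply Finset.filter_eq_empty_iff.mpr; intro x _; exact hα x
      rw [blockSize, this]
      simp
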